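/- Derivative of the particle motion with respect to its parameter: let n ∈ ℝ³ be a unit vector, let q = (α, τ) ∈ ℝ × ℝ³ with τ·n = 0, and let x ∈ ℝ³. Then the map s ↦ φ(sq, x) = R_T(sτ)(R_n(sα)x) from ℝ to ℝ³ is differentiable at s = 0 with derivative ∂_s(φ(sq,x))|_{s=0} = (n × τ) × x + α (n × x). -/

import Mathlib

open scoped RealInnerProductSpace

noncomputable section

/-- Euclidean 3-space. -/
abbrev E3 := EuclideanSpace ℝ (Fin 3)

/-- The cross product on `E3`. -/
def cross3 (a b : E3) : E3 :=
  (WithLp.equiv 2 (Fin 3 → ℝ)).symm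
    (crossProduct ((WithLp.equiv 2 (Fin 3 → ℝ)) a) ((WithLp.equiv 2 (Fin 3 → ℝ)) b))

/-- Rotation by angle `α` about the axis spanned by the unit vector `n`:
`R_n(α)x = (n·x)n + cos(α)((n × x) × n) + sin(α)(n × x)`. -/
def Rn (n : E3) (α : ℝ) (x : E3) : E3 :=
  (⟪n, x⟫ : ℝ) • n + Real.cos α • cross3 (cross3 n x) n + Real.sin α • cross3 n x

/- The tangential-translation rotation: for `τ ≠ 0` with `τ·n = 0`, setting
`τ̃ = n × (τ/‖τ‖)`, `R_T(τ)x = (τ̃·x)τ̃ + cos(‖τ‖)((τ̃ × x) × τ̃) + sin(‖τ‖)(τ̃ × x)`;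
and `R_T(0)x = x`. -/
open Classical in
def RT (n : E3) (τ : E3) (x : E3) : E3 :=
  if τ = 0 then x else
    (⟪cross3 n (‖τ‖⁻¹ • τ), x⟫ : ℝ) • cross3 n (‖τ‖⁻¹ • τ)
      + Real.cos ‖τ‖ • cross3 (cross3 (cross3 n (‖τ‖⁻¹ • τ)) x) (cross3 n (‖τ‖⁻¹ • τ))
      + Real.sin ‖τ‖ • cross3 (cross3 n (‖τ‖⁻¹ • τ)) x

/-- The rigid particle motion `φ((α,τ), x) = R_T(τ)(R_n(α)x)`. -/
def phi (n : E3) (p : ℝ × E3) (x : E3) : E3 := RT n p.2 (Rn n p.1 x)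

/-! ### Auxiliary lemmas -/

lemma cross3_smul_left (s : ℝ) (a b : E3) : cross3 (s • a) b = s • cross3 a b := by
  simp [cross3]

lemma cross3_smul_right (s : ℝ) (a b : E3) : cross3 a (s • b) = s • cross3 a b := by
  simp [cross3]

lemma cross3_neg_left (a b : E3) : cross3 (-a) b = -cross3 a b := by
  ext i; fin_cases i <;> simp [cross3, crossProduct] <;> ring

lemma cross3_neg_right (a b : E3) : cross3 a (-b) = -cross3 a b := by
  ext i; fin_cases i <;> simp [cross3, crossProduct] <;> ring

lemma cross3_add_right (a b c : E3) : cross3 a (b + c) = cross3 a b + cross3 a c := by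
  simp [cross3]

lemma cross3_zero_left (a : E3) : cross3 0 a = 0 := by simp [cross3]

lemma cross3_zero_right (a : E3) : cross3 a 0 = 0 := by simp [cross3]

/-- triple product expansion -/
lemma cross3_triple (u y : E3) :
    cross3 (cross3 u y) u = (⟪u, u⟫ : ℝ) • y - (⟪u, y⟫ : ℝ) • u := by
  ext i
  fin_cases i <;>
    simp [cross3, crossProduct, PiLp.inner_apply, Fin.sum_univ_three, RCLike.inner_apply,
      EuclideanSpace.real_norm_sq_eq] <;>
    ring

/-- Lagrange identity -/
lemma cross3_self_inner (a b : E3) :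
    (⟪cross3 a b, cross3 a b⟫ : ℝ) = ⟪a, a⟫ * ⟪b, b⟫ - ⟪a, b⟫ * ⟪a, b⟫ := by
  simp [cross3, crossProduct, PiLp.inner_apply, Fin.sum_univ_three, RCLike.inner_apply,
    EuclideanSpace.real_norm_sq_eq]
  ring

/-- Reconstruction from a unit axis. -/
lemma unit_recon {u : E3} (hu : (⟪u, u⟫ : ℝ) = 1) (y : E3) :
    (⟪u, y⟫ : ℝ) • u + cross3 (cross3 u y) u = y := by
  rw [cross3_triple, hu, one_smul]
  abel

/-- The generic rotation expression. -/
def RTexp (m : E3) (θ : ℝ) (y : E3) : E3 :=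
  (⟪m, y⟫ : ℝ) • m + Real.cos θ • cross3 (cross3 m y) m + Real.sin θ • cross3 m y

lemma RTexp_neg (m : E3) (θ : ℝ) (y : E3) : RTexp (-m) (-θ) y = RTexp m θ y := by
  simp [RTexp, cross3_neg_left, cross3_neg_right, smul_neg]

/-- The fixed-first-argument cross product as a linear map. -/
def crossL (u : E3) : E3 →ₗ[ℝ] E3 where
  toFun y := cross3 u y
  map_add' a b := cross3_add_right u a b
  map_smul' s a := cross3_smul_right s u a

/-- `y ↦ (u × y) × u` as a linear map. -/
def tripL (u : E3) : E3 →ₗ[ℝ] E3 where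
  toFun y := cross3 (cross3 u y) u
  map_add' a b := by simp [cross3]
  map_smul' s a := by simp [cross3]

lemma linderiv (L : E3 →ₗ[ℝ] E3) {f : ℝ → E3} {f' : E3} {x : ℝ}
    (hf : HasDerivAt f f' x) : HasDerivAt (fun s => L (f s)) (L f') x := by
  have := (L.toContinuousLinearMap.hasFDerivAt (x := f x)).comp_hasDerivAt x hf
  exact this

/-- derivative of the `Rn` part -/
lemma Rn_deriv (n : E3) (α : ℝ) (x : E3) :
    HasDerivAt (fun s : ℝ => Rn n (s * α) x) (α • cross3 n x) 0 := by
  have h1 : HasDerivAt (fun s : ℝ => s * α) α 0 := hasDerivAt_mul_const α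
  have hc := (h1.cos.smul_const (cross3 (cross3 n x) n))
  have hs := (h1.sin.smul_const (cross3 n x))
  have := ((hasDerivAt_const (0:ℝ) ((⟪n, x⟫ : ℝ) • n)).add hc).add hs
  exact this.congr_deriv (by simp)

lemma Rn_zero {n : E3} (hn : (⟪n, n⟫ : ℝ) = 1) (x : E3) : Rn n 0 x = x := by
  have := unit_recon hn x
  simpa [Rn] using this

/-- the map `s ↦ φ(sq, x) = R_T(sτ)(R_n(sα)x)` is differentiable at
`s = 0` with derivative `(n × τ) × x + α (n × x)`. -/
theorem particle_motion_deriv (n : E3) (hn : ‖n‖ = 1) (α : ℝ) (τ : E3)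
    (hτ : ⟪τ, n⟫ = 0) (x : E3) :
    HasDerivAt (fun s : ℝ => phi n (s * α, s • τ) x)
      (cross3 (cross3 n τ) x + α • cross3 n x) 0 := by
  have hnn : (⟪n, n⟫ : ℝ) = 1 := by
    rw [real_inner_self_eq_norm_mul_norm, hn]; norm_num
  have hR := Rn_deriv n α x
  by_cases hτ0 : τ = 0
  · subst hτ0
    have hfun : (fun s : ℝ => phi n (s * α, s • (0:E3)) x) = fun s : ℝ => Rn n (s * α) x := by
      funext s; simp [phi, RT]
    rw [hfun]
    simpa [cross3_zero_right, cross3_zero_left] using hR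
  · -- main case
    have hτn : ‖τ‖ ≠ 0 := norm_ne_zero_iff.mpr hτ0
    set v : E3 := ‖τ‖⁻¹ • τ with hv
    set u : E3 := cross3 n v with hu
    have hnτ : (⟪n, τ⟫ : ℝ) = 0 := by rw [real_inner_comm]; exact hτ
    have hnv : (⟪n, v⟫ : ℝ) = 0 := by rw [hv, real_inner_smul_right, hnτ, mul_zero]
    have hvv : (⟪v, v⟫ : ℝ) = 1 := by
      rw [hv, real_inner_smul_right, real_inner_smul_left,
        real_inner_self_eq_norm_mul_norm]
      field_simp
    have huu : (⟪u, u⟫ : ℝ) = 1 := by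
      rw [hu, cross3_self_inner, hnn, hvv, hnv]; ring
    set R : ℝ → E3 := fun s => Rn n (s * α) x with hRdef
    have hR0 : R 0 = x := by
      show Rn n (0 * α) x = x
      rw [zero_mul]; exact Rn_zero hnn x
    -- the smooth model function
    have hfeq : ∀ s : ℝ, phi n (s * α, s • τ) x = RTexp u (s * ‖τ‖) (R s) := by
      intro s
      rcases lt_trichotomy s 0 with hs | hs | hs
      · have hsne : s ≠ 0 := ne_of_lt hs
        have hst : s • τ ≠ 0 := smul_ne_zero hsne hτ0
        have hnorm : ‖s • τ‖ = -(s * ‖τ‖) := by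
          rw [norm_smul, Real.norm_eq_abs, abs_of_neg hs]; ring
        have hunit : ‖s • τ‖⁻¹ • (s • τ) = -v := by
          rw [hnorm, smul_smul, hv, ← neg_smul]
          congr 1
          field_simp
        have hcr : cross3 n (‖s • τ‖⁻¹ • (s • τ)) = -u := by
          rw [hunit, cross3_neg_right]
        have : phi n (s * α, s • τ) x = RTexp (-u) (-(s * ‖τ‖)) (R s) := by
          simp only [phi, RT, if_neg hst, RTexp]
          rw [hcr, hnorm]
        rw [this, RTexp_neg]
      · subst hs
        have h0 : phi n (0 * α, (0:ℝ) • τ) x = R 0 := by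
          show RT n ((0:ℝ) • τ) (Rn n (0 * α) x) = R 0
          rw [zero_smul, zero_mul]
          simp only [RT, if_pos]
          show Rn n 0 x = Rn n (0 * α) x
          rw [zero_mul]
        rw [h0]
        simp only [RTexp, zero_mul, Real.cos_zero, Real.sin_zero, one_smul, zero_smul,
          add_zero]
        exact (unit_recon huu (R 0)).symm
      · have hsne : s ≠ 0 := ne_of_gt hs
        have hst : s • τ ≠ 0 := smul_ne_zero hsne hτ0
        have hnorm : ‖s • τ‖ = s * ‖τ‖ := by
          rw [norm_smul, Real.norm_eq_abs, abs_of_pos hs]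
        have hunit : ‖s • τ‖⁻¹ • (s • τ) = v := by
          rw [hnorm, smul_smul, hv]
          congr 1
          field_simp
        have hcr : cross3 n (‖s • τ‖⁻¹ • (s • τ)) = u := by rw [hunit]
        simp only [phi, RT, if_neg hst, RTexp]
        rw [hcr, hnorm]
    -- derivatives of the pieces
    have hmul : HasDerivAt (fun s : ℝ => s * ‖τ‖) ‖τ‖ 0 := hasDerivAt_mul_const ‖τ‖
    have hinner : HasDerivAt (fun s : ℝ => (⟪u, R s⟫ : ℝ)) (⟪u, α • cross3 n x⟫ : ℝ) 0 := by
      have := (hasDerivAt_const (0:ℝ) u).inner ℝ hR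
      simpa using this
    have T1 := hinner.smul_const u
    have T2 := hmul.cos.smul (linderiv (tripL u) hR)
    have T3 := hmul.sin.smul (linderiv (crossL u) hR)
    have hsum := (T1.add T2).add T3
    have hfun : (fun s : ℝ => phi n (s * α, s • τ) x)
        = fun s : ℝ => (⟪u, R s⟫ : ℝ) • u
            + Real.cos (s * ‖τ‖) • tripL u (R s) + Real.sin (s * ‖τ‖) • crossL u (R s) := by
      funext s
      rw [hfeq s]
      rfl
    rw [hfun]
    refine hsum.congr_deriv ?_
    have hb : (⟪u, α • cross3 n x⟫ : ℝ) • u + tripL u (α • cross3 n x)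
        = α • cross3 n x := by
      exact unit_recon huu (α • cross3 n x)
    have hcx : ‖τ‖ • (crossL u x) = cross3 (cross3 n τ) x := by
      show ‖τ‖ • cross3 u x = _
      rw [hu, hv, cross3_smul_right, cross3_smul_left, smul_smul]
      rw [mul_inv_cancel₀ hτn, one_smul]
    rw [hR0]
    simp only [zero_mul, Real.cos_zero, Real.sin_zero, one_smul, zero_smul, neg_zero,
      zero_mul, smul_zero, add_zero, zero_add, one_mul]
    rw [hb, hcx]
    abel
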